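/- Combining the previous bounds: for the tensor-product OPE kernel K of rank p = m^d on [−1,1]^d with each one-dimensional factor satisfying the Christoffel–Darboux bound ∬(x−y)²|K_j|² dq_j dq_j ≤ 2a², the quantity (1/p²)∬ ‖z−w‖² |K(z,w)|² dq(z)dq(w) is at most 2a²·d·p^{−(1+1/d)}. -/

import Mathlib

open MeasureTheory

/-- For the tensor-product OPE kernel of rank p = m^d with 1-dimensional
Christoffel–Darboux bounds 2a², one gets (1/p²)∬‖z−w‖²|K|² ≤ 2a²·d·p^{−(1+1/d)}. -/
theorem tensor_kernel_variance_rate {d m : ℕ} (hd : 1 ≤ d) (hm : 1 ≤ m)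
    (q : Fin d → Measure ℝ) [∀ j, IsProbabilityMeasure (q j)]
    (K : Fin d → ℝ → ℝ → ℝ) (a : ℝ)
    (hmeas : ∀ j, Measurable fun z : ℝ × ℝ => K j z.1 z.2)
    (hsq : ∀ j, Integrable (fun z : ℝ × ℝ => (K j z.1 z.2) ^ 2) ((q j).prod (q j)))
    (hwsq : ∀ j, Integrable (fun z : ℝ × ℝ => (z.1 - z.2) ^ 2 * (K j z.1 z.2) ^ 2)
      ((q j).prod (q j)))
    (htrace : ∀ j, ∫ x, ∫ y, (K j x y) ^ 2 ∂(q j) ∂(q j) = m)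
    (hCD : ∀ j, ∫ x, ∫ y, (x - y) ^ 2 * (K j x y) ^ 2 ∂(q j) ∂(q j) ≤ 2 * a ^ 2)
    (hint : Integrable (fun zw : (Fin d → ℝ) × (Fin d → ℝ) =>
        (∑ i, (zw.1 i - zw.2 i) ^ 2) * ∏ j, (K j (zw.1 j) (zw.2 j)) ^ 2)
      ((Measure.pi q).prod (Measure.pi q))) :
    (1 / ((m : ℝ) ^ d) ^ 2) *
        ∫ zw : (Fin d → ℝ) × (Fin d → ℝ),
          (∑ i, (zw.1 i - zw.2 i) ^ 2) * ∏ j, (K j (zw.1 j) (zw.2 j)) ^ 2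
          ∂((Measure.pi q).prod (Measure.pi q))
      ≤ 2 * a ^ 2 * d * ((m : ℝ) ^ d) ^ (-(1 + 1 / (d : ℝ))) := by
  classical
  have hm0 : (0:ℝ) < m := by exact_mod_cast hm
  have hd0 : (0:ℝ) < d := by exact_mod_cast hd
  set μ := (Measure.pi q).prod (Measure.pi q) with hμ
  -- the per-coordinate factor functions
  set f : Fin d → Fin d → ℝ × ℝ → ℝ := fun i j u =>
    (if j = i then (u.1 - u.2) ^ 2 else 1) * (K j u.1 u.2) ^ 2 with hf
  have hfint : ∀ i j, Integrable (f i j) ((q j).prod (q j)) := by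
    intro i j
    by_cases h : j = i
    · have : f i j = fun u : ℝ × ℝ => (u.1 - u.2) ^ 2 * (K j u.1 u.2) ^ 2 := by
        funext u; simp only [hf]; rw [if_pos h]
      rw [this]; exact hwsq j
    · have : f i j = fun u : ℝ × ℝ => (K j u.1 u.2) ^ 2 := by
        funext u; simp only [hf]; rw [if_neg h, one_mul]
      rw [this]; exact hsq j
  -- measurability of the i-th term on the product space
  have hKm : ∀ j, Measurable fun zw : (Fin d → ℝ) × (Fin d → ℝ) =>
      (K j (zw.1 j) (zw.2 j)) ^ 2 := by
    intro j
    have hp : Measurable fun zw : (Fin d → ℝ) × (Fin d → ℝ) => (zw.1 j, zw.2 j) :=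
      ((measurable_pi_apply j).comp measurable_fst).prodMk
        ((measurable_pi_apply j).comp measurable_snd)
    exact ((hmeas j).comp hp).pow_const 2
  have htermMeas : ∀ i : Fin d, Measurable fun zw : (Fin d → ℝ) × (Fin d → ℝ) =>
      (zw.1 i - zw.2 i) ^ 2 * ∏ j, (K j (zw.1 j) (zw.2 j)) ^ 2 := by
    intro i
    exact ((((measurable_pi_apply i).comp measurable_fst).sub
      ((measurable_pi_apply i).comp measurable_snd)).pow_const 2).mul
      (Finset.measurable_prod _ fun j _ => hKm j)
  -- each term is integrable (dominated by the full integrand)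
  have htermInt : ∀ i : Fin d, Integrable (fun zw : (Fin d → ℝ) × (Fin d → ℝ) =>
      (zw.1 i - zw.2 i) ^ 2 * ∏ j, (K j (zw.1 j) (zw.2 j)) ^ 2) μ := by
    intro i
    refine hint.mono' (htermMeas i).aestronglyMeasurable ?_
    refine Filter.Eventually.of_forall fun zw => ?_
    have hP : (0:ℝ) ≤ ∏ j, (K j (zw.1 j) (zw.2 j)) ^ 2 :=
      Finset.prod_nonneg fun j _ => sq_nonneg _
    rw [Real.norm_eq_abs, abs_of_nonneg (mul_nonneg (sq_nonneg _) hP)]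
    refine mul_le_mul_of_nonneg_right ?_ hP
    exact Finset.single_le_sum (f := fun i => (zw.1 i - zw.2 i) ^ 2)
      (fun j _ => sq_nonneg _) (Finset.mem_univ i)
  -- value of the i-th term via the tensor structure
  let MS : ∀ _j : Fin d, MeasureSpace (ℝ × ℝ) := fun j => ⟨(q j).prod (q j)⟩
  have hsf : ∀ j : Fin d, SigmaFinite ((q j).prod (q j)) := fun j => inferInstance
  have key : ∀ i : Fin d,
      (∫ zw : (Fin d → ℝ) × (Fin d → ℝ),
        (zw.1 i - zw.2 i) ^ 2 * ∏ j, (K j (zw.1 j) (zw.2 j)) ^ 2 ∂μ)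
      = ∏ j, ∫ u : ℝ × ℝ, f i j u ∂((q j).prod (q j)) := by
    intro i
    have hmp := measurePreserving_arrowProdEquivProdArrow ℝ ℝ (Fin d) q q
    rw [hμ, ← hmp.integral_comp'
      (g := fun zw : (Fin d → ℝ) × (Fin d → ℝ) =>
        (zw.1 i - zw.2 i) ^ 2 * ∏ j, (K j (zw.1 j) (zw.2 j)) ^ 2)]
    have heq : ∀ u : Fin d → ℝ × ℝ,
        (((MeasurableEquiv.arrowProdEquivProdArrow ℝ ℝ (Fin d)) u).1 i
          - ((MeasurableEquiv.arrowProdEquivProdArrow ℝ ℝ (Fin d)) u).2 i) ^ 2 *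
          ∏ j, (K j (((MeasurableEquiv.arrowProdEquivProdArrow ℝ ℝ (Fin d)) u).1 j)
            (((MeasurableEquiv.arrowProdEquivProdArrow ℝ ℝ (Fin d)) u).2 j)) ^ 2
        = ∏ j, f i j (u j) := by
      intro u
      have : ∀ j, f i j (u j) = (if j = i then ((u j).1 - (u j).2) ^ 2 else 1) *
          (K j (u j).1 (u j).2) ^ 2 := fun j => rfl
      simp only [this, Finset.prod_mul_distrib, Finset.prod_ite_eq', Finset.mem_univ, if_true]
      rfl
    simp_rw [heq]
    exact MeasureTheory.integral_fintype_prod_eq_prod (E := fun _ => ℝ × ℝ)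
      (fun j u => f i j u) (μ := fun j => (q j).prod (q j))
  -- compute each factor
  have hfactor_ne : ∀ i j : Fin d, j ≠ i →
      (∫ u : ℝ × ℝ, f i j u ∂((q j).prod (q j))) = (m : ℝ) := by
    intro i j hji
    have : (fun u : ℝ × ℝ => f i j u) = fun u : ℝ × ℝ => (K j u.1 u.2) ^ 2 := by
      funext u; simp [hf, hji]
    rw [this, MeasureTheory.integral_prod _ (hsq j)]
    exact htrace j
  have hfactor_eq : ∀ i : Fin d,
      (∫ u : ℝ × ℝ, f i i u ∂((q i).prod (q i))) ≤ 2 * a ^ 2 := by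
    intro i
    have : (fun u : ℝ × ℝ => f i i u)
        = fun u : ℝ × ℝ => (u.1 - u.2) ^ 2 * (K i u.1 u.2) ^ 2 := by
      funext u; simp [hf]
    rw [this, MeasureTheory.integral_prod _ (hwsq i)]
    exact hCD i
  -- bound each term integral
  have hterm_le : ∀ i : Fin d,
      (∫ zw : (Fin d → ℝ) × (Fin d → ℝ),
        (zw.1 i - zw.2 i) ^ 2 * ∏ j, (K j (zw.1 j) (zw.2 j)) ^ 2 ∂μ)
      ≤ 2 * a ^ 2 * (m : ℝ) ^ (d - 1) := by
    intro i
    rw [key i, ← Finset.prod_erase_mul _ _ (Finset.mem_univ i)]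
    have hprod : ∏ j ∈ Finset.univ.erase i, (∫ u : ℝ × ℝ, f i j u ∂((q j).prod (q j)))
        = (m : ℝ) ^ (d - 1) := by
      rw [Finset.prod_congr rfl fun j hj => hfactor_ne i j (Finset.ne_of_mem_erase hj)]
      rw [Finset.prod_const, Finset.card_erase_of_mem (Finset.mem_univ i)]
      simp
    rw [hprod]
    calc (m:ℝ) ^ (d-1) * ∫ u : ℝ × ℝ, f i i u ∂((q i).prod (q i))
        ≤ (m:ℝ) ^ (d-1) * (2 * a ^ 2) :=
          mul_le_mul_of_nonneg_left (hfactor_eq i) (by positivity)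
      _ = 2 * a ^ 2 * (m:ℝ) ^ (d-1) := by ring
  -- sum over i
  have hsum : (∫ zw : (Fin d → ℝ) × (Fin d → ℝ),
        (∑ i, (zw.1 i - zw.2 i) ^ 2) * ∏ j, (K j (zw.1 j) (zw.2 j)) ^ 2 ∂μ)
      ≤ (d : ℝ) * (2 * a ^ 2 * (m : ℝ) ^ (d - 1)) := by
    have hrw : (fun zw : (Fin d → ℝ) × (Fin d → ℝ) =>
        (∑ i, (zw.1 i - zw.2 i) ^ 2) * ∏ j, (K j (zw.1 j) (zw.2 j)) ^ 2)
        = fun zw => ∑ i, (zw.1 i - zw.2 i) ^ 2 * ∏ j, (K j (zw.1 j) (zw.2 j)) ^ 2 := by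
      funext zw; rw [Finset.sum_mul]
    rw [hrw, integral_finset_sum _ fun i _ => htermInt i]
    calc ∑ i, ∫ zw : (Fin d → ℝ) × (Fin d → ℝ),
          (zw.1 i - zw.2 i) ^ 2 * ∏ j, (K j (zw.1 j) (zw.2 j)) ^ 2 ∂μ
        ≤ ∑ _i : Fin d, 2 * a ^ 2 * (m : ℝ) ^ (d - 1) :=
          Finset.sum_le_sum fun i _ => hterm_le i
      _ = (d : ℝ) * (2 * a ^ 2 * (m : ℝ) ^ (d - 1)) := by
          rw [Finset.sum_const, Finset.card_univ, Fintype.card_fin, nsmul_eq_mul]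
  -- final arithmetic
  have hrpow : ((m : ℝ) ^ d) ^ (-(1 + 1 / (d : ℝ))) = (m : ℝ) ^ (d - 1) / ((m : ℝ) ^ d) ^ 2 := by
    have h1 : ((m : ℝ) ^ d : ℝ) ^ (-(1 + 1 / (d : ℝ)))
        = (m : ℝ) ^ ((d : ℝ) * (-(1 + 1 / (d : ℝ)))) := by
      rw [← Real.rpow_natCast (m : ℝ) d, ← Real.rpow_mul hm0.le]
    have h2 : (d : ℝ) * (-(1 + 1 / (d : ℝ))) = -((d : ℝ) + 1) := by
      field_simp
    have h3 : (m : ℝ) ^ (-((d : ℝ) + 1)) = ((m : ℝ) ^ (d + 1))⁻¹ := by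
      rw [show ((d : ℝ) + 1) = ((d + 1 : ℕ) : ℝ) by push_cast; ring,
        Real.rpow_neg hm0.le, Real.rpow_natCast]
    have hpow : (m : ℝ) ^ (d - 1) * (m : ℝ) ^ (d + 1) = ((m : ℝ) ^ d) ^ 2 := by
      rw [← pow_add, ← pow_mul]
      congr 1
      omega
    rw [h1, h2, h3, eq_div_iff (by positivity : (((m : ℝ) ^ d) ^ 2) ≠ 0), ← hpow]
    field_simp
  have hconst : (0:ℝ) ≤ 1 / ((m : ℝ) ^ d) ^ 2 := by positivity
  calc (1 / ((m : ℝ) ^ d) ^ 2) * ∫ zw : (Fin d → ℝ) × (Fin d → ℝ),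
        (∑ i, (zw.1 i - zw.2 i) ^ 2) * ∏ j, (K j (zw.1 j) (zw.2 j)) ^ 2 ∂μ
      ≤ (1 / ((m : ℝ) ^ d) ^ 2) * ((d : ℝ) * (2 * a ^ 2 * (m : ℝ) ^ (d - 1))) :=
        mul_le_mul_of_nonneg_left hsum hconst
    _ = 2 * a ^ 2 * d * ((m : ℝ) ^ d) ^ (-(1 + 1 / (d : ℝ))) := by
        rw [hrpow]; ring
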